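/- If X is a topological space such that Ω^{n−1}(X,x) is a small generated space, then π_n^{qtop}(X,x) is an indiscrete topological group. -/

import Mathlib

open Topology.Homotopy unitInterval

noncomputable section

/-- The quotient topology on `πₙ(X,x)` induced by `q : Ωⁿ(X,x) → πₙ(X,x)`,
making it the quasitopological homotopy group `πₙ^{qtop}(X,x)`. -/
instance piQTop (N X : Type*) [TopologicalSpace X] (x : X) :
    TopologicalSpace (HomotopyGroup N X x) :=
  inferInstanceAs (TopologicalSpace (Quotient _))

/-- A loop `β` at `y` is small if it is homotopic (rel endpoints) to a loop lying in
every neighbourhood of `y`. -/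
def IsSmallLoop {Y : Type} [TopologicalSpace Y] {y : Y} (β : Path y y) : Prop :=
  ∀ U ∈ nhds y, ∃ β' : Path y y, Set.range ⇑β' ⊆ U ∧ Path.Homotopic β β'

/-- The small generated subgroup `π₁^{sg}(Y,y)` of the fundamental group: the subgroup
generated by the classes `[α * β * α⁻¹]` where `α` is a path starting at `y` and `β` is
a small loop at `α(1)`. -/
def sgSubgroup (Y : Type) [TopologicalSpace Y] (y : Y) :
    Subgroup (FundamentalGroup (TopCat.of Y) y) :=
  Subgroup.closure {g | ∃ (z : Y) (α : Path y z) (β : Path z z),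
    IsSmallLoop β ∧ g = FundamentalGroup.fromPath ⟦(α.trans β).trans α.symm⟧}

/-- `Y` is small generated if its fundamental group equals its small generated
subgroup at every point. -/
def SmallGeneratedSpace (Y : Type) [TopologicalSpace Y] : Prop :=
  ∀ y : Y, sgSubgroup Y y = ⊤

/- ### Auxiliary lemmas -/

open Set CategoryTheory GenLoop Topology

/-- In the compact-open topology, any open set containing the constant map contains all maps
with range in a suitable open neighbourhood of the constant's value. -/
lemma aux_claimC {Z Y : Type*} [TopologicalSpace Z] [TopologicalSpace Y] {z : Y} {A : Set C(Z, Y)}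
    (hA : IsOpen A) (hc : ContinuousMap.const Z z ∈ A) :
    ∃ V : Set Y, IsOpen V ∧ z ∈ V ∧ ∀ g : C(Z, Y), Set.range g ⊆ V → g ∈ A := by
  have hb := TopologicalSpace.isTopologicalBasis_of_subbasis
    (ContinuousMap.compactOpen_eq (X := Z) (Y := Y))
  obtain ⟨b, ⟨F, ⟨hFfin, hFsub⟩, rfl⟩, hcb, hbA⟩ := hb.exists_subset_of_mem_open hc hA
  have h' : ∀ m : F, ∃ K : Set Z, IsCompact K ∧ ∃ U : Set Y, IsOpen U ∧
      {f : C(Z, Y) | MapsTo f K U} = (m : Set C(Z, Y)) := by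
    intro m
    obtain ⟨K, hK, U, hU, h⟩ := hFsub m.2
    exact ⟨K, hK, U, hU, h⟩
  choose K hK U hU hm using h'
  classical
  refine ⟨⋂ m : F, if (K m).Nonempty then U m else univ, ?_, ?_, ?_⟩
  · have : Finite ↥F := hFfin
    exact isOpen_iInter_of_finite fun m => by
      split_ifs with hne
      · exact hU m
      · exact isOpen_univ
  · refine mem_iInter.2 fun m => ?_
    split_ifs with hne
    · obtain ⟨zK, hzK⟩ := hne
      have : ContinuousMap.const Z z ∈ (m : Set C(Z, Y)) := hcb m.1 m.2
      rw [← hm m] at this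
      exact this hzK
    · trivial
  · intro g hg
    apply hbA
    intro m hmF
    show g ∈ m
    have hmm : {f : C(Z, Y) | MapsTo f (K ⟨m, hmF⟩) (U ⟨m, hmF⟩)} = m := hm ⟨m, hmF⟩
    rw [← hmm]
    intro a haK
    have h2 := mem_iInter.1 (hg (mem_range_self a)) ⟨m, hmF⟩
    rw [if_pos ⟨a, haK⟩] at h2
    exact h2

/-- Specialization to loop spaces: any open set of loops containing the constant loop contains
all loops with range in a suitable open neighbourhood. -/
lemma aux_pathClaim {Y : Type*} [TopologicalSpace Y] {z : Y} {A : Set (Path z z)}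
    (hA : IsOpen A) (hrefl : Path.refl z ∈ A) :
    ∃ V : Set Y, IsOpen V ∧ z ∈ V ∧ ∀ γ : Path z z, Set.range ⇑γ ⊆ V → γ ∈ A := by
  obtain ⟨A', hA', hpre⟩ := isOpen_induced_iff.1 hA
  have hconst : ContinuousMap.const I z ∈ A' := by
    have : (Path.refl z).toContinuousMap = ContinuousMap.const I z := by
      ext t; rfl
    rw [← this]
    rw [← hpre] at hrefl
    exact hrefl
  obtain ⟨V, hVopen, hzV, hV⟩ := aux_claimC hA' hconst
  refine ⟨V, hVopen, hzV, fun γ hγ => ?_⟩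
  rw [← hpre]
  exact hV γ.toContinuousMap hγ

lemma aux_smallLoop_symm {Y : Type} [TopologicalSpace Y] {z : Y} {β : Path z z}
    (hβ : IsSmallLoop β) : IsSmallLoop β.symm := by
  intro U hU
  obtain ⟨β', hr, ⟨H⟩⟩ := hβ U hU
  refine ⟨β'.symm, ?_, ⟨H.symm₂⟩⟩
  rintro _ ⟨t, rfl⟩
  exact hr ⟨σ t, rfl⟩

/-- The geometric core: a saturated open set of loops is stable under concatenation with a
conjugate of a small loop. -/
lemma aux_lemmaG {Y : Type} [TopologicalSpace Y] {y z : Y} {U : Set (Path y y)} (hU : IsOpen U)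
    (hsat : ∀ p q : Path y y, p.Homotopic q → p ∈ U → q ∈ U)
    (α : Path y z) (β : Path z z) (hβ : IsSmallLoop β) (p : Path y y) (hp : p ∈ U) :
    p.trans ((α.trans β).trans α.symm) ∈ U := by
  have c1 : Continuous fun γ : Path z z => α.trans γ :=
    Path.continuous_trans.comp (continuous_const.prodMk continuous_id)
  have c2 : Continuous fun γ : Path z z => (α.trans γ).trans α.symm :=
    Path.continuous_trans.comp (c1.prodMk continuous_const)
  have c3 : Continuous fun γ : Path z z => p.trans ((α.trans γ).trans α.symm) :=
    Path.continuous_trans.comp (continuous_const.prodMk c2)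
  set Φ := fun γ : Path z z => p.trans ((α.trans γ).trans α.symm) with hΦ
  have h0 : Φ (Path.refl z) ∈ U := by
    apply hsat p _ ?_ hp
    have h1 : (α.trans (Path.refl z)).Homotopic α := ⟨Path.Homotopy.transRefl α⟩
    have h2 : ((α.trans (Path.refl z)).trans α.symm).Homotopic (Path.refl y) :=
      (h1.hcomp (Path.Homotopic.refl α.symm)).trans ⟨(Path.Homotopy.reflTransSymm α).symm⟩
    have h3 : (Φ (Path.refl z)).Homotopic (p.trans (Path.refl y)) :=
      (Path.Homotopic.refl p).hcomp h2
    exact (h3.trans ⟨Path.Homotopy.transRefl p⟩).symm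
  have hopen : IsOpen (Φ ⁻¹' U) := hU.preimage c3
  obtain ⟨V, hVopen, hzV, hV⟩ := aux_pathClaim hopen h0
  obtain ⟨β', hr, hhom⟩ := hβ V (hVopen.mem_nhds hzV)
  have hmem : Φ β' ∈ U := hV β' hr
  apply hsat (Φ β') (Φ β) ?_ hmem
  exact ((Path.Homotopic.refl p).hcomp
    (((Path.Homotopic.refl α).hcomp hhom).hcomp (Path.Homotopic.refl α.symm))).symm

attribute [local instance] Path.Homotopic.setoid

/-- In a small generated space, any nonempty open set of loops which is saturated for homotopy
contains every loop. -/
lemma aux_mainPath {Y : Type} [TopologicalSpace Y] (y : Y) (hsg : sgSubgroup Y y = ⊤)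
    {U : Set (Path y y)} (hU : IsOpen U)
    (hsat : ∀ p q : Path y y, p.Homotopic q → p ∈ U → q ∈ U)
    {f : Path y y} (hf : f ∈ U) (g : Path y y) : g ∈ U := by
  set FG := FundamentalGroup (TopCat.of Y) y with hFG
  set W : FG → Prop := fun c => ∃ p ∈ U, FundamentalGroup.fromPath ⟦p⟧ = c with hWdef
  have hW : ∀ p : Path y y, W (FundamentalGroup.fromPath ⟦p⟧) ↔ p ∈ U := by
    intro p
    constructor
    · rintro ⟨p', hp', he⟩
      have : (⟦p'⟧ : Path.Homotopic.Quotient y y) = ⟦p⟧ :=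
        congrArg (fun c : FG => FundamentalGroup.toPath c) he
      exact hsat p' p (Quotient.exact this) hp'
    · intro hp; exact ⟨p, hp, rfl⟩
  have hind : ∀ c : FG, ∀ d : FG, W d → W (c * d) ∧ W (c⁻¹ * d) := by
    intro c
    have hc : c ∈ sgSubgroup Y y := hsg ▸ Subgroup.mem_top c
    rw [sgSubgroup] at hc
    induction hc using Subgroup.closure_induction with
    | mem c hcmem =>
      obtain ⟨z, α, β, hβ, rfl⟩ := hcmem
      rintro d ⟨p, hp, rfl⟩
      constructor
      · have e1 : FundamentalGroup.fromPath (X := TopCat.of Y) ⟦(α.trans β).trans α.symm⟧ *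
            FundamentalGroup.fromPath ⟦p⟧ =
            FundamentalGroup.fromPath ⟦p.trans ((α.trans β).trans α.symm)⟧ := rfl
        rw [e1, hW]
        exact aux_lemmaG hU hsat α β hβ p hp
      · have e2 : (FundamentalGroup.fromPath (X := TopCat.of Y) ⟦(α.trans β).trans α.symm⟧)⁻¹ *
            FundamentalGroup.fromPath ⟦p⟧ =
            FundamentalGroup.fromPath ⟦p.trans (((α.trans β).trans α.symm).symm)⟧ := rfl
        rw [e2, hW]
        have h1 : p.trans ((α.trans β.symm).trans α.symm) ∈ U :=
          aux_lemmaG hU hsat α β.symm (aux_smallLoop_symm hβ) p hp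
        have heq : ((α.trans β).trans α.symm).symm = α.trans (β.symm.trans α.symm) := by
          rw [Path.trans_symm, Path.trans_symm, Path.symm_symm]
        rw [heq]
        refine hsat _ _ ?_ h1
        exact (Path.Homotopic.refl p).hcomp ⟨Path.Homotopy.transAssoc α β.symm α.symm⟩
    | one =>
      intro d hd
      simpa using And.intro hd hd
    | mul a b _ _ ha hb =>
      intro d hd
      refine ⟨?_, ?_⟩
      · rw [mul_assoc]; exact (ha _ (hb d hd).1).1
      · rw [mul_inv_rev, mul_assoc]; exact (hb _ (ha d hd).2).2
    | inv a _ ha =>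
      intro d hd
      exact ⟨(ha d hd).2, by rw [inv_inv]; exact (ha d hd).1⟩
  have hWf : W (FundamentalGroup.fromPath ⟦f⟧) := (hW f).2 hf
  have hfin := (hind (FundamentalGroup.fromPath ⟦g⟧ * (FundamentalGroup.fromPath ⟦f⟧)⁻¹)
    (FundamentalGroup.fromPath ⟦f⟧) hWf).1
  rw [inv_mul_cancel_right] at hfin
  exact (hW g).1 hfin

/- ### Transporting generalized loop spaces along an equivalence of index types -/

/-- Reindexing continuous map on cubes. -/
def aux_cubeMap {M M' : Type*} (ι : M ≃ M') : C(I^M', I^M) :=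
  ⟨fun y' m => y' (ι m), continuous_pi fun m => continuous_apply (ι m)⟩

/-- Reindexing map on generalized loops. -/
def aux_glc {M M' : Type*} {X : Type} [TopologicalSpace X] {x : X} (ι : M ≃ M') :
    (Ω^ M X x) → (Ω^ M' X x) := fun f =>
  ⟨f.1.comp (aux_cubeMap ι), by
    rintro y' ⟨j, hj⟩
    exact f.2 _ ⟨ι.symm j, by simpa [aux_cubeMap] using hj⟩⟩

lemma aux_glc_glc {M M' : Type*} {X : Type} [TopologicalSpace X] {x : X} (ι : M ≃ M')
    (f : Ω^ M X x) : aux_glc ι.symm (aux_glc ι f) = f := by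
  have key : ∀ y : I^M, (fun m => y (ι.symm (ι m))) = y := by
    intro y; funext m; rw [Equiv.symm_apply_apply]
  ext y
  show f.1 (fun m => y (ι.symm (ι m))) = f.1 y
  rw [key y]

/-- The homeomorphism of generalized loop spaces induced by an equivalence of index types. -/
def aux_glcHomeo {M M' : Type*} {X : Type} [TopologicalSpace X] {x : X} (ι : M ≃ M') :
    (Ω^ M X x) ≃ₜ (Ω^ M' X x) where
  toFun := aux_glc ι
  invFun := aux_glc ι.symm
  left_inv f := aux_glc_glc ι f
  right_inv f := by simpa using aux_glc_glc ι.symm f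
  continuous_toFun :=
    (((aux_cubeMap ι).continuous_precomp).comp continuous_subtype_val).subtype_mk _
  continuous_invFun :=
    (((aux_cubeMap ι.symm).continuous_precomp).comp continuous_subtype_val).subtype_mk _

lemma aux_glcHomeo_const {M M' : Type*} {X : Type} [TopologicalSpace X] {x : X} (ι : M ≃ M') :
    aux_glcHomeo (X := X) (x := x) ι const = const := rfl

lemma aux_cast_homotopic {X : Type*} [TopologicalSpace X] {a b a' b' : X} {γ δ : Path a b}
    (h : γ.Homotopic δ) (hx : a' = a) (hy : b' = b) :
    (γ.cast hx hy).Homotopic (δ.cast hx hy) := by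
  subst hx; subst hy
  have e1 : γ.cast rfl rfl = γ := by ext t; rfl
  have e2 : δ.cast rfl rfl = δ := by ext t; rfl
  rw [e1, e2]; exact h

/-- If `Ω^{n-1}(X,x)` is a small generated space then `πₙ^{qtop}(X,x)` is an indiscrete
topological group: its quotient topology is the indiscrete one and it is a topological
group (jointly continuous multiplication, continuous inversion).  (Here the paper's `n ≥ 1`
is written as `n + 1`.) -/
theorem stmt4 (n : ℕ) (X : Type) [TopologicalSpace X] (x : X)
    (h : SmallGeneratedSpace (GenLoop (Fin n) X x)) :
    piQTop (Fin (n + 1)) X x = ⊤ ∧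
      (Continuous fun p : HomotopyGroup (Fin (n + 1)) X x × HomotopyGroup (Fin (n + 1)) X x =>
        p.1 * p.2) ∧
      Continuous fun a : HomotopyGroup (Fin (n + 1)) X x => a⁻¹ := by
  have htop : piQTop (Fin (n + 1)) X x = ⊤ := by
    refine le_antisymm le_top ?_
    rw [TopologicalSpace.le_def]
    intro s hs
    rw [TopologicalSpace.isOpen_top_iff]
    rcases s.eq_empty_or_nonempty with hemp | ⟨a, ha⟩
    · exact Or.inl hemp
    right
    -- the saturated open preimage in the space of generalized loops
    set q : (Ω^ (Fin (n + 1)) X x) → HomotopyGroup (Fin (n + 1)) X x :=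
      fun p => ⟦p⟧ with hq
    have hqcont : Continuous q := continuous_coinduced_rng
    set U : Set (Ω^ (Fin (n + 1)) X x) := q ⁻¹' s with hUdef
    have hUopen : IsOpen U := hs.preimage hqcont
    have hsatU : ∀ p p' : Ω^ (Fin (n + 1)) X x, GenLoop.Homotopic p p' → p ∈ U → p' ∈ U := by
      intro p p' hpp' hp
      have : q p = q p' := Quotient.sound hpp'
      simpa [hUdef, ← this] using hp
    -- move to the loop space of Y₁ := Ω^{j ≠ 0}
    set i : Fin (n + 1) := 0 with hi
    set U₁ : Set (Path (const : Ω^ {j : Fin (n+1) // j ≠ i} X x) const) :=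
      fromLoop i ⁻¹' U with hU₁def
    have hU₁open : IsOpen U₁ := hUopen.preimage (continuous_fromLoop i)
    have hsat₁ : ∀ p p' : Path (const : Ω^ {j : Fin (n+1) // j ≠ i} X x) const,
        p.Homotopic p' → p ∈ U₁ → p' ∈ U₁ := by
      intro p p' hpp' hp
      refine hsatU _ _ (homotopicFrom i ?_) hp
      rwa [to_from i p, to_from i p']
    -- move to the loop space of Y₂ := Ω^(Fin n) via the index equivalence
    set ι : {j : Fin (n+1) // j ≠ i} ≃ Fin n := (finSuccAboveEquiv i).symm with hι
    set e := aux_glcHomeo (X := X) (x := x) ι with he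
    have hec : e const = const := aux_glcHomeo_const ι
    have hec' : (const : Ω^ {j : Fin (n+1) // j ≠ i} X x) = e.symm const := by
      rw [← hec, Homeomorph.symm_apply_apply]
    have hec'' : (const : Ω^ (Fin n) X x) = e const := hec.symm
    set Pinv : Path (const : Ω^ (Fin n) X x) const →
        Path (const : Ω^ {j : Fin (n+1) // j ≠ i} X x) const :=
      fun δ => (δ.map e.symm.continuous).cast hec' hec' with hPinv
    set Pfwd : Path (const : Ω^ {j : Fin (n+1) // j ≠ i} X x) const →
        Path (const : Ω^ (Fin n) X x) const :=
      fun γ => (γ.map e.continuous).cast hec'' hec'' with hPfwd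
    have hPinvPfwd : ∀ γ, Pinv (Pfwd γ) = γ := by
      intro γ
      have hpt : ∀ t, (Pinv (Pfwd γ)) t = γ t := fun t => e.symm_apply_apply (γ t)
      ext t y
      rw [hpt t]
    have hPinvCont : Continuous Pinv := by
      apply Path.continuous_uncurry_iff.1
      show Continuous fun p : (Path (const : Ω^ (Fin n) X x) const) × I => e.symm (p.1 p.2)
      exact e.symm.continuous.comp continuous_eval
    set U₂ : Set (Path (const : Ω^ (Fin n) X x) const) := Pinv ⁻¹' U₁ with hU₂def
    have hU₂open : IsOpen U₂ := hU₁open.preimage hPinvCont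
    have hsat₂ : ∀ p p' : Path (const : Ω^ (Fin n) X x) const,
        p.Homotopic p' → p ∈ U₂ → p' ∈ U₂ := by
      intro p p' hpp' hp
      refine hsat₁ _ _ ?_ hp
      exact aux_cast_homotopic (hpp'.map ⟨⇑e.symm, e.symm.continuous⟩) hec' hec'
    -- the element of s
    obtain ⟨f, rfl⟩ := Quotient.exists_rep a
    have hfU : f ∈ U := ha
    have hf₁ : toLoop i f ∈ U₁ := by
      show fromLoop i (toLoop i f) ∈ U
      have : fromLoop i (toLoop i f) = f := by
        simpa using (loopHomeo i).symm_apply_apply f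
      rwa [this]
    have hf₂ : Pfwd (toLoop i f) ∈ U₂ := by
      show Pinv (Pfwd (toLoop i f)) ∈ U₁
      rwa [hPinvPfwd]
    -- conclude using the main path lemma
    ext b
    simp only [Set.mem_univ, iff_true]
    obtain ⟨g, rfl⟩ := Quotient.exists_rep b
    have hg₂ : Pfwd (toLoop i g) ∈ U₂ :=
      aux_mainPath const (h const) hU₂open hsat₂ hf₂ (Pfwd (toLoop i g))
    have hg₁ : toLoop i g ∈ U₁ := by
      have := hg₂
      rw [hU₂def, Set.mem_preimage, hPinvPfwd] at this
      exact this
    have hgU : g ∈ U := by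
      have : fromLoop i (toLoop i g) = g := by
        simpa using (loopHomeo i).symm_apply_apply g
      rw [hU₁def, Set.mem_preimage, this] at hg₁
      exact hg₁
    exact hgU
  refine ⟨htop, ?_, ?_⟩ <;> rw [htop] <;> exact continuous_top
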